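/- The infinite series for the tie probability equals the finite sum: for every positive integer k, ∑_{n=k}^∞ C(n-1,k-1)^2 (1/2)^{2n} = ∑_{n=0}^{k-1} C(2k-n-2,n) · C(2k-2n-2,k-n-1) · (1/3)^{2k-n-1}. -/

import Mathlib

open Finset

/-- Subset-of-subset symmetry, unconditional in ℕ. -/
lemma mm_ssub (j i s : ℕ) : j.choose i * (j - i).choose s = j.choose s * (j - s).choose i := by
  rcases le_or_gt i j with hij | hij
  · rcases le_or_gt s j with hsj | hsj
    · rcases le_or_gt (i + s) j with h | h
      · have h1 := Nat.choose_mul (n := j) (k := i + s) (s := i) (Nat.le_add_right _ _)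
        have h2 := Nat.choose_mul (n := j) (k := i + s) (s := s) (Nat.le_add_left _ _)
        rw [Nat.add_sub_cancel_left] at h1
        rw [Nat.add_sub_cancel] at h2
        have hsymm : (i + s).choose i = (i + s).choose s := by
          rw [← Nat.choose_symm (Nat.le_add_left s i)]
          congr 1
          omega
        rw [← h1, ← h2, hsymm]
      · rw [Nat.choose_eq_zero_of_lt (show j - i < s by omega),
          Nat.choose_eq_zero_of_lt (show j - s < i by omega)]
        ring
    · rw [Nat.choose_eq_zero_of_lt (show j - i < s by omega),
        Nat.choose_eq_zero_of_lt hsj]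
      ring
  · rw [Nat.choose_eq_zero_of_lt hij,
      Nat.choose_eq_zero_of_lt (show j - s < i by omega)]
    ring

/-- Vandermonde in range form. -/
lemma mm_vdm (m l n : ℕ) :
    ∑ b ∈ range (n + 1), m.choose b * l.choose (n - b) = (m + l).choose n := by
  rw [Nat.add_choose_eq, Finset.Nat.sum_antidiagonal_eq_sum_range_succ_mk]

/-- Key inner sum: ∑_i C(j,i)² C(j-i,b) = C(j,b) C(2j-b,j). -/
lemma mm_sumB (j b : ℕ) :
    ∑ i ∈ range (j + 1), j.choose i * (j.choose i * (j - i).choose b)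
      = j.choose b * (2 * j - b).choose j := by
  have step : ∑ i ∈ range (j + 1), j.choose i * (j.choose i * (j - i).choose b)
      = j.choose b * ∑ i ∈ range (j + 1), (j - b).choose i * j.choose (j - i) := by
    rw [Finset.mul_sum]
    refine Finset.sum_congr rfl fun i hi => ?_
    have hij : i ≤ j := Nat.lt_succ_iff.mp (mem_range.mp hi)
    rw [mm_ssub j i b, Nat.choose_symm hij]
    ring
  rcases le_or_gt b j with hbj | hbj
  · rw [step, mm_vdm]
    congr 2
    omega
  · rw [step, Nat.choose_eq_zero_of_lt hbj]
    simp

/-- Decomposition of the squared binomial. -/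
lemma mm_lemC (j m : ℕ) :
    ∑ i ∈ range (j + 1), j.choose i ^ 2 * (m + 2 * j - i).choose (2 * j)
      = (m + j).choose j ^ 2 := by
  have expand : ∀ i ∈ range (j + 1), j.choose i ^ 2 * (m + 2 * j - i).choose (2 * j)
      = ∑ b ∈ range (2 * j + 1),
          j.choose i * (j.choose i * (j - i).choose b) * (m + j).choose (2 * j - b) := by
    intro i hi
    have hij : i ≤ j := Nat.lt_succ_iff.mp (mem_range.mp hi)
    have h1 : m + 2 * j - i = (j - i) + (m + j) := by omega
    rw [h1, ← mm_vdm (j - i) (m + j) (2 * j), Finset.mul_sum]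
    exact Finset.sum_congr rfl fun b _ => by ring
  rw [Finset.sum_congr rfl expand, Finset.sum_comm]
  have step2 : ∀ b ∈ range (2 * j + 1),
      ∑ i ∈ range (j + 1),
          j.choose i * (j.choose i * (j - i).choose b) * (m + j).choose (2 * j - b)
        = j.choose b * ((m + j).choose j * m.choose (j - b)) := by
    intro b _
    rw [← Finset.sum_mul, mm_sumB]
    rcases le_or_gt b j with hbj | hbj
    · rcases le_or_gt (2 * j - b) (m + j) with h | h
      · have key := Nat.choose_mul (n := m + j) (k := 2 * j - b) (s := j) (by omega)
        have e1 : m + j - j = m := by omega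
        have e2 : 2 * j - b - j = j - b := by omega
        rw [e1, e2] at key
        calc j.choose b * (2 * j - b).choose j * (m + j).choose (2 * j - b)
            = j.choose b * ((m + j).choose (2 * j - b) * (2 * j - b).choose j) := by ring
          _ = j.choose b * ((m + j).choose j * m.choose (j - b)) := by rw [key]
      · rw [Nat.choose_eq_zero_of_lt (show m + j < 2 * j - b by omega),
          Nat.choose_eq_zero_of_lt (show m < j - b by omega)]
        ring
    · rw [Nat.choose_eq_zero_of_lt hbj]
      ring
  rw [Finset.sum_congr rfl step2]
  have step3 : ∑ b ∈ range (2 * j + 1), j.choose b * ((m + j).choose j * m.choose (j - b))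
      = (m + j).choose j * ∑ b ∈ range (2 * j + 1), j.choose b * m.choose (j - b) := by
    rw [Finset.mul_sum]
    exact Finset.sum_congr rfl fun b _ => by ring
  rw [step3,
    ← Finset.sum_subset (Finset.range_subset_range.mpr (show j + 1 ≤ 2 * j + 1 by omega))
      (fun b _ hb => by
        rw [Nat.choose_eq_zero_of_lt (show j < b by simpa using hb), Nat.zero_mul]),
    mm_vdm j m j]
  rw [Nat.add_comm j m]
  ring

/-- The finite identity. -/
lemma mm_lemE (j : ℕ) :
    ∑ n ∈ range (j + 1), (2 * j - n).choose n * (2 * j - 2 * n).choose (j - n) * 3 ^ n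
      = ∑ i ∈ range (j + 1), j.choose i ^ 2 * 4 ^ (j - i) := by
  have hL : ∀ n ∈ range (j + 1),
      (2 * j - n).choose n * (2 * j - 2 * n).choose (j - n) * 3 ^ n
        = j.choose n * (2 * j - n).choose j * 3 ^ n := by
    intro n hn
    have hnj : n ≤ j := Nat.lt_succ_iff.mp (mem_range.mp hn)
    have key := Nat.choose_mul (n := 2 * j - n) (k := j) (s := n) hnj
    have e : 2 * j - n - n = 2 * j - 2 * n := by omega
    rw [e] at key
    rw [← key]
    ring
  have hR : ∀ i ∈ range (j + 1), j.choose i ^ 2 * 4 ^ (j - i)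
      = ∑ s ∈ range (j + 1), j.choose i * (j.choose i * (j - i).choose s) * 3 ^ s := by
    intro i hi
    have hij : i ≤ j := Nat.lt_succ_iff.mp (mem_range.mp hi)
    have h4 : (4 : ℕ) ^ (j - i)
        = ∑ s ∈ range ((j - i) + 1), 3 ^ s * (j - i).choose s := by
      have := add_pow (3 : ℕ) 1 (j - i)
      simpa using this
    calc j.choose i ^ 2 * 4 ^ (j - i)
        = ∑ s ∈ range ((j - i) + 1), j.choose i * (j.choose i * (j - i).choose s) * 3 ^ s := by
          rw [h4, Finset.mul_sum]
          exact Finset.sum_congr rfl fun s _ => by ring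
      _ = ∑ s ∈ range (j + 1), j.choose i * (j.choose i * (j - i).choose s) * 3 ^ s :=
          Finset.sum_subset (Finset.range_subset_range.mpr (by omega))
            (fun s _ hs => by
              rw [Nat.choose_eq_zero_of_lt (show j - i < s by simpa using hs)]
              simp)
  rw [Finset.sum_congr rfl hL, Finset.sum_congr rfl hR, Finset.sum_comm]
  refine Finset.sum_congr rfl fun s _ => ?_
  rw [← Finset.sum_mul, mm_sumB]

lemma mm_hasSum_shift (j i : ℕ) (hij : i ≤ j) :
    HasSum (fun m : ℕ => ((m + 2 * j - i).choose (2 * j) : ℝ) * (1 / 4) ^ m)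
      ((1 / 4) ^ i * (1 / (1 - 1 / 4) ^ (2 * j + 1))) := by
  have hr : ‖(1 / 4 : ℝ)‖ < 1 := by
    rw [Real.norm_eq_abs, abs_of_pos] <;> norm_num
  have base := hasSum_choose_mul_geometric_of_norm_lt_one (2 * j) hr
  have key : (fun s : ℕ => (1 / 4 : ℝ) ^ i * (((s + 2 * j).choose (2 * j) : ℝ) * (1 / 4) ^ s))
      = fun s : ℕ => ((s + i + 2 * j - i).choose (2 * j) : ℝ) * (1 / 4) ^ (s + i) := by
    funext s
    have e : s + i + 2 * j - i = s + 2 * j := by omega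
    rw [e, pow_add]
    ring
  have shifted := key ▸ (base.mul_left ((1 / 4 : ℝ) ^ i))
  have result := (hasSum_nat_add_iff
    (f := fun m : ℕ => ((m + 2 * j - i).choose (2 * j) : ℝ) * (1 / 4) ^ m) i).mp shifted
  have hzero : ∑ m ∈ range i, ((m + 2 * j - i).choose (2 * j) : ℝ) * (1 / 4) ^ m = 0 := by
    refine Finset.sum_eq_zero fun m hm => ?_
    have hmi : m < i := mem_range.mp hm
    rw [Nat.choose_eq_zero_of_lt (show m + 2 * j - i < 2 * j by omega)]
    simp
  rwa [hzero, add_zero] at result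

lemma mm_mainHasSum (j : ℕ) :
    HasSum (fun m : ℕ => ((m + j).choose j : ℝ) ^ 2 * (1 / 4) ^ m)
      (∑ i ∈ range (j + 1),
        (j.choose i : ℝ) ^ 2 * ((1 / 4) ^ i * (1 / (1 - 1 / 4) ^ (2 * j + 1)))) := by
  have h := hasSum_sum (f := fun (i : ℕ) (m : ℕ) =>
      (j.choose i : ℝ) ^ 2 * (((m + 2 * j - i).choose (2 * j) : ℝ) * (1 / 4) ^ m))
    (a := fun i => (j.choose i : ℝ) ^ 2 * ((1 / 4) ^ i * (1 / (1 - 1 / 4) ^ (2 * j + 1))))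
    (s := range (j + 1))
    (fun i hi => (mm_hasSum_shift j i (Nat.lt_succ_iff.mp (mem_range.mp hi))).mul_left _)
  have e : (fun m : ℕ => ∑ i ∈ range (j + 1),
      (j.choose i : ℝ) ^ 2 * (((m + 2 * j - i).choose (2 * j) : ℝ) * (1 / 4) ^ m))
      = fun m : ℕ => ((m + j).choose j : ℝ) ^ 2 * (1 / 4) ^ m := by
    funext m
    have := mm_lemC j m
    calc ∑ i ∈ range (j + 1),
        (j.choose i : ℝ) ^ 2 * (((m + 2 * j - i).choose (2 * j) : ℝ) * (1 / 4) ^ m)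
        = (∑ i ∈ range (j + 1),
            (j.choose i : ℝ) ^ 2 * ((m + 2 * j - i).choose (2 * j) : ℝ)) * (1 / 4) ^ m := by
          rw [Finset.sum_mul]
          exact Finset.sum_congr rfl fun i _ => by ring
      _ = ((m + j).choose j : ℝ) ^ 2 * (1 / 4) ^ m := by
          congr 1
          exact_mod_cast congrArg (Nat.cast : ℕ → ℝ) this
  rw [← e]
  exact h

/-- The infinite series for the tie probability in the M&M game (two players,
`k` M&M's each, fair coins) equals the finite sum coming from the compressed game.
The infinite sum over `n ≥ k` is reindexed by `n = m + k`. -/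
theorem mm_tie_infinite_eq_finite (k : ℕ) (hk : 0 < k) :
    ∑' m : ℕ, (((m + k - 1).choose (k - 1) : ℝ)) ^ 2 * (1 / 2) ^ (2 * (m + k)) =
      ∑ n ∈ Finset.range k,
        ((2 * k - n - 2).choose n : ℝ) * ((2 * k - 2 * n - 2).choose (k - n - 1)) *
          (1 / 3) ^ (2 * k - n - 1) := by
  obtain ⟨j, rfl⟩ : ∃ j, k = j + 1 := ⟨k - 1, by omega⟩
  have hmain := (mm_mainHasSum j).mul_left ((1 / 4 : ℝ) ^ (j + 1))
  have hpt : ∀ m : ℕ,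
      (((m + (j + 1) - 1).choose ((j + 1) - 1) : ℝ)) ^ 2 * (1 / 2) ^ (2 * (m + (j + 1)))
        = (1 / 4 : ℝ) ^ (j + 1) * (((m + j).choose j : ℝ) ^ 2 * (1 / 4) ^ m) := by
    intro m
    have e1 : m + (j + 1) - 1 = m + j := by omega
    have e2 : (j + 1) - 1 = j := by omega
    rw [e1, e2]
    have e3 : ((1 : ℝ) / 2) ^ (2 * (m + (j + 1))) = (1 / 4) ^ (j + 1) * (1 / 4) ^ m := by
      rw [pow_mul, ← pow_add]
      norm_num
      ring
    rw [e3]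
    ring
  rw [tsum_congr hpt, hmain.tsum_eq, Finset.mul_sum]
  have hLpt : ∀ i ∈ range (j + 1),
      (1 / 4 : ℝ) ^ (j + 1) *
          ((j.choose i : ℝ) ^ 2 * ((1 / 4) ^ i * (1 / (1 - 1 / 4) ^ (2 * j + 1))))
        = (1 / 3 : ℝ) ^ (2 * j + 1) * ((j.choose i : ℝ) ^ 2 * 4 ^ (j - i)) := by
    intro i hi
    have hij : i ≤ j := Nat.lt_succ_iff.mp (mem_range.mp hi)
    have e34 : (1 - 1 / 4 : ℝ) = 3 / 4 := by norm_num
    have h4 : (4 : ℝ) ^ (2 * j + 1) = 4 ^ (j + 1) * (4 ^ i * 4 ^ (j - i)) := by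
      rw [← pow_add, ← pow_add]
      congr 1
      omega
    have inv1 : ((1 : ℝ) / 4) ^ (j + 1) * (4 : ℝ) ^ (j + 1) = 1 := by
      rw [← mul_pow]
      norm_num
    have inv2 : ((1 : ℝ) / 4) ^ i * (4 : ℝ) ^ i = 1 := by
      rw [← mul_pow]
      norm_num
    have hrw : (1 : ℝ) / ((3 : ℝ) / 4) ^ (2 * j + 1)
        = 4 ^ (2 * j + 1) * (1 / 3) ^ (2 * j + 1) := by
      rw [div_pow, one_div_div, div_pow, one_pow]
      ring
    calc (1 / 4 : ℝ) ^ (j + 1) *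
          ((j.choose i : ℝ) ^ 2 * ((1 / 4) ^ i * (1 / (1 - 1 / 4) ^ (2 * j + 1))))
        = (j.choose i : ℝ) ^ 2 * ((1 / 3) ^ (2 * j + 1) *
            ((((1 / 4) ^ (j + 1) * 4 ^ (j + 1)) * ((1 / 4) ^ i * 4 ^ i)) * 4 ^ (j - i))) := by
          rw [e34, hrw, h4]
          ring
      _ = (1 / 3 : ℝ) ^ (2 * j + 1) * ((j.choose i : ℝ) ^ 2 * 4 ^ (j - i)) := by
          rw [inv1, inv2]
          ring
  rw [Finset.sum_congr rfl hLpt, ← Finset.mul_sum]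
  have hRpt : ∀ n ∈ range (j + 1),
      ((2 * (j + 1) - n - 2).choose n : ℝ) * ((2 * (j + 1) - 2 * n - 2).choose ((j + 1) - n - 1)) *
          (1 / 3) ^ (2 * (j + 1) - n - 1)
        = (1 / 3 : ℝ) ^ (2 * j + 1) *
            (((2 * j - n).choose n : ℝ) * ((2 * j - 2 * n).choose (j - n)) * 3 ^ n) := by
    intro n hn
    have hnj : n ≤ j := Nat.lt_succ_iff.mp (mem_range.mp hn)
    have e1 : 2 * (j + 1) - n - 2 = 2 * j - n := by omega
    have e2 : 2 * (j + 1) - 2 * n - 2 = 2 * j - 2 * n := by omega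
    have e3 : (j + 1) - n - 1 = j - n := by omega
    have e4 : 2 * (j + 1) - n - 1 = 2 * j + 1 - n := by omega
    rw [e1, e2, e3, e4]
    have inv3 : ((1 : ℝ) / 3) ^ n * (3 : ℝ) ^ n = 1 := by
      rw [← mul_pow]
      norm_num
    have epow : ((1 : ℝ) / 3) ^ (2 * j + 1 - n) * ((1 / 3) ^ n * 3 ^ n)
        = (1 / 3) ^ (2 * j + 1) * 3 ^ n := by
      rw [← mul_assoc, ← pow_add]
      congr 2
      omega
    rw [inv3, mul_one] at epow
    rw [epow]
    ring
  rw [Finset.sum_congr rfl hRpt, ← Finset.mul_sum]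
  congr 1
  have c1 : (((∑ i ∈ range (j + 1), j.choose i ^ 2 * 4 ^ (j - i) : ℕ)) : ℝ)
      = ∑ i ∈ range (j + 1), (j.choose i : ℝ) ^ 2 * 4 ^ (j - i) := by
    push_cast
    rfl
  have c2 : (((∑ n ∈ range (j + 1),
        (2 * j - n).choose n * (2 * j - 2 * n).choose (j - n) * 3 ^ n : ℕ)) : ℝ)
      = ∑ n ∈ range (j + 1),
          ((2 * j - n).choose n : ℝ) * ((2 * j - 2 * n).choose (j - n)) * 3 ^ n := by
    push_cast
    rfl
  rw [← c1, ← c2, mm_lemE]
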